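/- For a colored word w = w_1···w_t over the alphabet A with shuffle orders ⋖ and ⋖' that agree except that b ⋖ ā while ā ⋖' b (for some specific unbarred b and barred ā), define conv(w) to fix all letters other than b, ā and to cyclically rotate each maximal consecutive subword consisting only of b's and ā's once to the right. Then Des_{⋖'}(conv(w)) = Des_{⋖}(w), where Des_⋖(w) = { i : w_i ⋗ w_{i+1}, or w_i and w_{i+1} are equal barred letters }. -/

import Mathlib

open scoped BigOperators
open Classical

noncomputable section

namespace NCS

/-- A colored letter: an element of `Fin N` together with a `Bool` which is
`true` for barred letters and `false` for unbarred letters. -/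
abbrev Letter (N : ℕ) := Fin N × Bool

variable {N : ℕ}

/-- The key of the natural order `1 < 1̄ < 2 < 2̄ < ⋯ < N < N̄`. -/
def natKey (x : Letter N) : ℕ := 2 * x.1.val + (if x.2 then 1 else 0)

/-- The key of the big bar order `1 ≺ ⋯ ≺ N ≺ 1̄ ≺ ⋯ ≺ N̄`. -/
def barKey (N : ℕ) (x : Letter N) : ℕ := if x.2 then N + x.1.val else x.1.val

/-- A shuffle order on the alphabet, encoded by an injective key function which is
increasing on unbarred letters and on barred letters. -/
def IsShuffleKey (key : Letter N → ℕ) : Prop :=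
  Function.Injective key ∧
  (∀ a b : Fin N, a < b → key (a, false) < key (b, false)) ∧
  (∀ a b : Fin N, a < b → key (a, true) < key (b, true))

/-- The free associative `ℤ`-algebra on the alphabet. -/
abbrev FA (N : ℕ) := MonoidAlgebra ℤ (FreeMonoid (Letter N))

/-- The monomial of a colored word. -/
def wrd (w : List (Letter N)) : FA N := MonoidAlgebra.single (FreeMonoid.ofList w) 1

/-- `y ≥' x` : `y > x`, or `y` and `x` are equal barred letters. -/
def colGE (key : Letter N → ℕ) (y x : Letter N) : Prop :=
  key x < key y ∨ (y = x ∧ y.2 = true)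

/-- `y ≤'' z` : `y < z`, or `y` and `z` are equal unbarred letters. -/
def rowLE (key : Letter N → ℕ) (y z : Letter N) : Prop :=
  key y < key z ∨ (y = z ∧ y.2 = false)

/-- `x ≤col y` : `x < y`, or `x` and `y` are equal barred letters. -/
def colLE (key : Letter N → ℕ) (x y : Letter N) : Prop :=
  key x < key y ∨ (x = y ∧ x.2 = true)

/-- The noncommutative super elementary symmetric function `e_k(S)` with letters
restricted to the set `S`. -/
def eSet (key : Letter N → ℕ) (S : Set (Letter N)) (k : ℕ) : FA N :=
  ∑ f ∈ (Finset.univ : Finset (Fin k → Letter N)).filter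
      (fun f => (∀ i, f i ∈ S) ∧ ∀ i j : Fin k, (j : ℕ) = (i : ℕ) + 1 → colGE key (f i) (f j)),
    wrd (List.ofFn f)

/-- The noncommutative super elementary symmetric function `e_k(u)`. -/
def eU (key : Letter N → ℕ) (k : ℕ) : FA N := eSet key Set.univ k

/-- `e_k(u)` with integer index; `0` for negative `k`. -/
def eZ (key : Letter N → ℕ) (k : ℤ) : FA N := if 0 ≤ k then eU key k.toNat else 0

/-- `e_k(S)` with integer index; `0` for negative `k`. -/
def eSetZ (key : Letter N → ℕ) (S : Set (Letter N)) (k : ℤ) : FA N :=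
  if 0 ≤ k then eSet key S k.toNat else 0

/-- The noncommutative super homogeneous symmetric function `h_k(u)`. -/
def hU (key : Letter N → ℕ) (k : ℕ) : FA N :=
  ∑ f ∈ (Finset.univ : Finset (Fin k → Letter N)).filter
      (fun f => ∀ i j : Fin k, (j : ℕ) = (i : ℕ) + 1 → rowLE key (f i) (f j)),
    wrd (List.ofFn f)

/-- The relations generating the two-sided ideal `I_Kron` (with respect to the
natural order; recall `natKey x + 1 = natKey y` says `x = y↓`). -/
inductive kronRel (N : ℕ) : FA N → FA N → Prop
  | rel3 (x y : Letter N) (hy : y.2 = false) (h : natKey x < natKey y) :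
      kronRel N (wrd [y, y, x]) (wrd [y, x, y])
  | rel3b (y z : Letter N) (hy : y.2 = false) (h : natKey y < natKey z) :
      kronRel N (wrd [z, y, y]) (wrd [y, z, y])
  | rel4 (y z : Letter N) (hy : y.2 = true) (h : natKey y < natKey z) :
      kronRel N (wrd [y, y, z]) (wrd [y, z, y])
  | rel4b (x y : Letter N) (hy : y.2 = true) (h : natKey x < natKey y) :
      kronRel N (wrd [x, y, y]) (wrd [y, x, y])
  | rot (x y z : Letter N) (h1 : natKey x + 1 = natKey y) (h2 : natKey y + 1 = natKey z) :
      kronRel N (wrd [x, z, y] - wrd [z, x, y]) (wrd [y, x, z] - wrd [y, z, x])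
  | far (x z : Letter N) (h : natKey x + 2 < natKey z) :
      kronRel N (wrd [x, z]) (wrd [z, x])

/-- The relations generating the ⋖-colored plactic ideal `I_plac^⋖`. -/
inductive placRel (N : ℕ) (key : Letter N → ℕ) : FA N → FA N → Prop
  | k1 (x y z : Letter N) (h1 : key x < key y) (h2 : key y < key z) :
      placRel N key (wrd [x, z, y]) (wrd [z, x, y])
  | k2 (x y z : Letter N) (h1 : key x < key y) (h2 : key y < key z) :
      placRel N key (wrd [y, x, z]) (wrd [y, z, x])
  | k3 (x y : Letter N) (hy : y.2 = false) (h : key x < key y) :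
      placRel N key (wrd [y, y, x]) (wrd [y, x, y])
  | k3b (y z : Letter N) (hy : y.2 = false) (h : key y < key z) :
      placRel N key (wrd [z, y, y]) (wrd [y, z, y])
  | k4 (y z : Letter N) (hy : y.2 = true) (h : key y < key z) :
      placRel N key (wrd [y, y, z]) (wrd [y, z, y])
  | k4b (x y : Letter N) (hy : y.2 = true) (h : key x < key y) :
      placRel N key (wrd [x, y, y]) (wrd [y, x, y])

/-- The relations generating the ideal `I_kronknuth`. -/
inductive kkRel (N : ℕ) : FA N → FA N → Prop
  | rel3 (x y : Letter N) (hy : y.2 = false) (h : natKey x < natKey y) :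
      kkRel N (wrd [y, y, x]) (wrd [y, x, y])
  | rel3b (y z : Letter N) (hy : y.2 = false) (h : natKey y < natKey z) :
      kkRel N (wrd [z, y, y]) (wrd [y, z, y])
  | rel4 (y z : Letter N) (hy : y.2 = true) (h : natKey y < natKey z) :
      kkRel N (wrd [y, y, z]) (wrd [y, z, y])
  | rel4b (x y : Letter N) (hy : y.2 = true) (h : natKey x < natKey y) :
      kkRel N (wrd [x, y, y]) (wrd [y, x, y])
  | rot (x y z : Letter N) (h1 : natKey x + 1 = natKey y) (h2 : natKey y + 1 = natKey z) :
      kkRel N (wrd [x, z, y] - wrd [z, x, y]) (wrd [y, x, z] - wrd [y, z, x])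
  | kk1 (x y z : Letter N) (h1 : natKey x < natKey y) (h2 : natKey y < natKey z)
      (h3 : natKey x + 2 < natKey z) :
      kkRel N (wrd [x, z, y]) (wrd [z, x, y])
  | kk2 (x y z : Letter N) (h1 : natKey x < natKey y) (h2 : natKey y < natKey z)
      (h3 : natKey x + 2 < natKey z) :
      kkRel N (wrd [y, x, z]) (wrd [y, z, x])

end NCS
namespace NCS

variable {N : ℕ}

/-- The ordinary word `w^r`: barred letters shuffled to the right, that subword
reversed and de-barred.  Letters are recorded `1`-indexed. -/
def plainr (w : List (Letter N)) : List ℕ :=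
  (w.filter (fun x => !x.2)).map (fun x => x.1.val + 1) ++
    ((w.filter (fun x => x.2)).reverse).map (fun x => x.1.val + 1)

/-- The number of barred letters of a colored word. -/
def barredCount (w : List (Letter N)) : ℕ := (w.filter (fun x => x.2)).length

/-- An ordinary word (in the `1`-indexed alphabet) is Yamanouchi of content `lam`
(`lam i` = multiplicity of the letter `i+1`). -/
def IsYamOf (lam : ℕ → ℕ) (u : List ℕ) : Prop :=
  (∀ i : ℕ, u.count (i + 1) = lam i) ∧
    ∀ t i : ℕ, (u.drop t).count (i + 2) ≤ (u.drop t).count (i + 1)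

/-- An ordinary word is Yamanouchi (of some content). -/
def IsYamWord (u : List ℕ) : Prop :=
  ∀ t i : ℕ, (u.drop t).count (i + 2) ≤ (u.drop t).count (i + 1)

/-- The set of colored Yamanouchi words of content `lam` with exactly `d` barred letters. -/
def CYW (N : ℕ) (lam : ℕ → ℕ) (d : ℕ) : Set (List (Letter N)) :=
  {w | IsYamOf lam (plainr w) ∧ barredCount w = d}

/-- `CYW` as a finset (all its members have length `n = Σ lam`). -/
def CYWfin (N : ℕ) (lam : ℕ → ℕ) (d n : ℕ) : Finset (List (Letter N)) :=
  ((Finset.univ : Finset (Fin n → Letter N)).image List.ofFn).filter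
    (fun w => w ∈ CYW N lam d)

/-- A set of colored words is shuffle closed. -/
def ShuffleClosed (W : Set (List (Letter N))) : Prop :=
  ∀ (u v : List (Letter N)) (x y : Letter N), x.2 ≠ y.2 →
    (u ++ x :: y :: v) ∈ W → (u ++ y :: x :: v) ∈ W

/-- The ⋖-descent set of a colored word (`0`-indexed positions). -/
def DesSet (key : Letter N → ℕ) (w : List (Letter N)) : Set ℕ :=
  {i | ∃ h : i + 1 < w.length,
    key (w.get ⟨i + 1, h⟩) < key (w.get ⟨i, Nat.lt_of_succ_lt h⟩) ∨
      (w.get ⟨i, Nat.lt_of_succ_lt h⟩ = w.get ⟨i + 1, h⟩ ∧ (w.get ⟨i + 1, h⟩).2 = true)}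

/-- Coefficient of the monomial `m` in Gessel's fundamental quasisymmetric
function `Q_S` for words of length `t`. -/
def Qcoeff (t : ℕ) (S : Set ℕ) (m : ℕ →₀ ℕ) : ℤ :=
  Nat.card {i : Fin t → ℕ //
    (∀ j k : Fin t, j ≤ k → i j ≤ i k) ∧
    (∀ j k : Fin t, (k : ℕ) = (j : ℕ) + 1 → (j : ℕ) ∈ S → i j < i k) ∧
    (∀ v : ℕ, m v = (Finset.univ.filter (fun j : Fin t => i j = v)).card)}

/-- Gessel's fundamental quasisymmetric function as a power series in the
variables `x_0, x_1, …`. -/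
def Qqs (t : ℕ) (S : Set ℕ) : MvPowerSeries ℕ ℤ := fun m => Qcoeff t S m

/-- The boxes of the (possibly restricted) shape with column lengths bounded by
`rows` and row lengths given by `nu`. -/
def shapeFin (nu : ℕ → ℕ) (rows : ℕ) : Finset (ℕ × ℕ) :=
  (Finset.range rows ×ˢ Finset.range (nu 0)).filter (fun p => p.2 < nu p.1)

/-- `E` is a ⋖-colored tableau of shape `nu` (rows weakly increase with equal
letters unbarred; columns weakly increase with equal letters barred). -/
def IsCT (key : Letter N → ℕ) (nu : ℕ → ℕ) (E : ℕ × ℕ → Letter N) : Prop :=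
  (∀ r c : ℕ, c + 1 < nu r → rowLE key (E (r, c)) (E (r, c + 1))) ∧
  (∀ r c : ℕ, c < nu (r + 1) → colLE key (E (r, c)) (E (r + 1, c)))

/-- Pad a partition given on `Fin n` to a function on `ℕ`. -/
def padF {n : ℕ} (f : Fin n → ℕ) : ℕ → ℕ := fun i => if h : i < n then f ⟨i, h⟩ else 0

/-- Extend a filling of the shape to all of `ℕ × ℕ` by a junk letter. -/
def extT (nu : ℕ → ℕ) (rows : ℕ) (junk : Letter N)
    (T : {p : ℕ × ℕ // p ∈ shapeFin nu rows} → Letter N) : ℕ × ℕ → Letter N :=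
  fun p => if h : p ∈ shapeFin nu rows then T ⟨p, h⟩ else junk

/-- The reading word `sqread`: diagonals from southwest to northeast; on each
diagonal the unbarred entries are read in the ↖ direction followed by the barred
entries in the ↘ direction. -/
def sqread (nu : ℕ → ℕ) (rows : ℕ) (E : ℕ × ℕ → Letter N) : List (Letter N) :=
  (List.range (rows + nu 0)).flatMap (fun k =>
    let boxes : List (ℕ × ℕ) := (List.range rows).filterMap (fun (r : ℕ) =>
      let c : ℤ := (r : ℤ) + (k : ℤ) - (rows : ℤ) + 1
      if 0 ≤ c ∧ c.toNat < nu r then some (r, c.toNat) else none)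
    ((boxes.filter (fun b => !(E b).2)).reverse ++ boxes.filter (fun b => (E b).2)).map E)

/-- The column reading word: columns read bottom to top, leftmost column first. -/
def colword (nu : ℕ → ℕ) (rows : ℕ) (E : ℕ × ℕ → Letter N) : List (Letter N) :=
  (List.range (nu 0)).flatMap (fun c =>
    ((List.range rows).filter (fun r => decide (c < nu r))).reverse.map (fun r => E (r, c)))

/-- The Kostka number: semistandard Young tableaux of shape `nu` and content `m`
(entries `1`-indexed; entry `i+1` corresponds to the variable `x_i`). -/
def kostka (nu : ℕ → ℕ) (m : ℕ →₀ ℕ) : ℤ :=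
  Nat.card {T : ℕ × ℕ → ℕ //
    (∀ r c : ℕ, c + 1 < nu r → T (r, c) ≤ T (r, c + 1)) ∧
    (∀ r c : ℕ, c < nu (r + 1) → T (r, c) < T (r + 1, c)) ∧
    (∀ r c : ℕ, c < nu r → 1 ≤ T (r, c)) ∧
    (∀ r c : ℕ, ¬ c < nu r → T (r, c) = 0) ∧
    (∀ i : ℕ, (m i : ℕ) = Nat.card {p : ℕ × ℕ // p.2 < nu p.1 ∧ T p = i + 1})}

/-- The parts of a partition of `n`, as a weakly decreasing list. -/
def partList {n : ℕ} (ν : Nat.Partition n) : List ℕ := (ν.parts.sort (· ≤ ·)).reverse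

/-- The parts of a partition of `n`, as a function `ℕ → ℕ` (`0`-indexed). -/
def partFun {n : ℕ} (ν : Nat.Partition n) : ℕ → ℕ := fun i => (partList ν).getD i 0

/-- The conjugate partition: `ν'_j = #{i < rows : ν_i ≥ j}`. -/
def conjP (nu : ℕ → ℕ) (j : ℕ) (rows : ℕ) : ℕ :=
  ((Finset.range rows).filter (fun i => j ≤ nu i)).card

/-- The noncommutative super Schur function
`𝔍_ν(u) = Σ_{π ∈ S_t} sgn(π) e_{ν'_1+π(1)-1}(u) ⋯ e_{ν'_t+π(t)-t}(u)`, `t = ν_1`. -/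
def JncF (key : Letter N → ℕ) (nu : ℕ → ℕ) (rows : ℕ) : FA N :=
  ∑ π : Equiv.Perm (Fin (nu 0)),
    (Equiv.Perm.sign π : ℤ) •
      (List.ofFn (fun i : Fin (nu 0) =>
        eZ key ((conjP nu (i.1 + 1) rows : ℤ) + ((π i).1 : ℤ) - (i.1 : ℤ)))).prod

end NCS
namespace NCS

variable {N : ℕ}

/-- A partition diagram (as a set of `0`-indexed boxes). -/
def IsPartitionDiagram (P : Finset (ℕ × ℕ)) : Prop :=
  ∀ p ∈ P, ∀ q : ℕ × ℕ, q.1 ≤ p.1 → q.2 ≤ p.2 → q ∈ P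

/-- `p ≤ q` in the northeast order: `q.1 ≤ p.1` and `p.2 ≤ q.2`. -/
def neLE (p q : ℕ × ℕ) : Prop := q.1 ≤ p.1 ∧ p.2 ≤ q.2

/-- A restricted shape: a lower order ideal of a partition diagram for the
northeast order. -/
def IsRestrictedShape (D : Finset (ℕ × ℕ)) : Prop :=
  ∃ P : Finset (ℕ × ℕ), IsPartitionDiagram P ∧ D ⊆ P ∧
    ∀ p ∈ P, ∀ q ∈ D, neLE p q → p ∈ D

/-- A restricted colored tableau (for the natural order). -/
structure RCT (N : ℕ) where
  shape : Finset (ℕ × ℕ)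
  restricted : IsRestrictedShape shape
  entry : ℕ × ℕ → Letter N
  row : ∀ r c : ℕ, (r, c) ∈ shape → (r, c + 1) ∈ shape →
    natKey (entry (r, c)) < natKey (entry (r, c + 1)) ∨
      (entry (r, c) = entry (r, c + 1) ∧ (entry (r, c)).2 = false)
  col : ∀ r c : ℕ, (r, c) ∈ shape → (r + 1, c) ∈ shape →
    natKey (entry (r, c)) < natKey (entry (r + 1, c)) ∨
      (entry (r, c) = entry (r + 1, c) ∧ (entry (r, c)).2 = true)

/-- A ↖ arrow of `R` from the box `tail` (containing `a+1`) to the box `head`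
(containing `a`); the two boxes are opposite corners of a rectangle whose
intersection with the shape is an arrow subtableau. -/
def nwArrow (R : RCT N) (tail head : ℕ × ℕ) : Prop :=
  head ∈ R.shape ∧ tail ∈ R.shape ∧ head.1 < tail.1 ∧ head.2 < tail.2 ∧
  (∃ a b : Fin N, R.entry head = (a, false) ∧ R.entry tail = (b, false) ∧
    (b : ℕ) = (a : ℕ) + 1) ∧
  ((tail.1 = head.1 + 1 ∧ tail.2 = head.2 + 1 ∧ (tail.1, head.2) ∈ R.shape) ∨
   (head.1 + 1 < tail.1 ∧
    (∀ p ∈ R.shape, head.1 ≤ p.1 → p.1 ≤ tail.1 → head.2 ≤ p.2 → p.2 ≤ tail.2 →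
      p.2 = head.2 ∨ p.1 = tail.1) ∧
    (∀ r : ℕ, head.1 ≤ r → r ≤ tail.1 → (r, head.2) ∈ R.shape) ∧
    (∀ c : ℕ, head.2 ≤ c → c ≤ tail.2 → (tail.1, c) ∈ R.shape)))

/-- A ↘ arrow of `R` from the box `tail` (containing `ā`) to the box `head`
(containing `(a+1)`-bar). -/
def seArrow (R : RCT N) (tail head : ℕ × ℕ) : Prop :=
  tail ∈ R.shape ∧ head ∈ R.shape ∧ tail.1 < head.1 ∧ tail.2 < head.2 ∧
  (∃ a b : Fin N, R.entry tail = (a, true) ∧ R.entry head = (b, true) ∧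
    (b : ℕ) = (a : ℕ) + 1) ∧
  ((head.1 = tail.1 + 1 ∧ head.2 = tail.2 + 1 ∧ (head.1, tail.2) ∈ R.shape) ∨
   (tail.2 + 1 < head.2 ∧
    (∀ p ∈ R.shape, tail.1 ≤ p.1 → p.1 ≤ head.1 → tail.2 ≤ p.2 → p.2 ≤ head.2 →
      p.2 = tail.2 ∨ p.1 = head.1) ∧
    (∀ r : ℕ, tail.1 ≤ r → r ≤ head.1 → (r, tail.2) ∈ R.shape) ∧
    (∀ c : ℕ, tail.2 ≤ c → c ≤ head.2 → (head.1, c) ∈ R.shape)))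

/-- A box is the tail of an arrow of `R`. -/
def IsArrowTail (R : RCT N) (β : ℕ × ℕ) : Prop :=
  (∃ h, nwArrow R β h) ∨ (∃ h, seArrow R β h)

/-- A box which is maximal in `D` for the northeast order. -/
def NEMaximal (D : Finset (ℕ × ℕ)) (β : ℕ × ℕ) : Prop :=
  β ∈ D ∧ ∀ q ∈ D, neLE β q → q = β

/-- `L` is an arrow respecting reading order of the RCT `R`: an enumeration of
the boxes compatible with the northeast order, reading every arrow tail before
the corresponding head. -/
def IsARWord (R : RCT N) (L : List (ℕ × ℕ)) : Prop :=
  L.Nodup ∧ (∀ β : ℕ × ℕ, β ∈ L ↔ β ∈ R.shape) ∧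
  (∀ β β' : ℕ × ℕ, β ∈ L → β' ∈ L → neLE β β' → β ≠ β' →
    L.idxOf β < L.idxOf β') ∧
  (∀ t h : ℕ × ℕ, nwArrow R t h ∨ seArrow R t h → L.idxOf t < L.idxOf h)

end NCS
namespace NCS

variable {N : ℕ}

/-! ### Word conversion -/

/-- Rotate a list once to the right. -/
def rotR {α : Type*} (l : List α) : List α := l.rotate (l.length - 1)

/-- Word conversion: fix all letters not satisfying `p` and rotate each maximal
consecutive run of letters satisfying `p` once to the right. -/
def conv {α : Type*} (p : α → Bool) : List α → List α
  | [] => []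
  | x :: xs =>
    if p x = true then
      rotR ((x :: xs).takeWhile p) ++ conv p (xs.dropWhile p)
    else x :: conv p xs
termination_by l => l.length
decreasing_by
  · exact Nat.lt_succ_of_le ((List.dropWhile_suffix p).length_le)
  · exact Nat.lt_succ_self _

/-! ### Ordinary RSK insertion -/

/-- Row bumping: insert `x` into a weakly increasing row, bumping the leftmost
entry strictly greater than `x`. -/
def bumpRow : List ℕ → ℕ → List ℕ × Option ℕ
  | [], x => ([x], none)
  | y :: ys, x =>
    if x < y then (x :: ys, some y)
    else
      let p := bumpRow ys x
      (y :: p.1, p.2)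

/-- Schensted insertion of a letter into a tableau (given as its list of rows). -/
def insertEntry : List (List ℕ) → ℕ → List (List ℕ)
  | [], x => [[x]]
  | row :: rest, x =>
    match bumpRow row x with
    | (row', none) => row' :: rest
    | (row', some y) => row' :: insertEntry rest y

/-- The insertion tableau of an ordinary word. -/
def insertionTableau (w : List ℕ) : List (List ℕ) := w.foldl insertEntry []

/-- A tableau (list of rows) is superstandard: row `i` is filled with `i+1`'s
(`1`-indexed letters). -/
def IsSuperstandard (Q : List (List ℕ)) : Prop :=
  ∀ i : ℕ, ∀ h : i < Q.length, ∀ v ∈ Q.get ⟨i, h⟩, v = i + 1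

/-! ### Standardization -/

/-- The ⋖-standardization of a colored word: occurrences of each letter are
relabelled, smallest letter first, left to right for unbarred letters and
right to left for barred letters, by `1, 2, …`. -/
def stdz (key : Letter N → ℕ) (w : List (Letter N)) : List ℕ :=
  (List.finRange w.length).map (fun i =>
    ((List.finRange w.length).filter
        (fun j => decide (key (w.get j) < key (w.get i)))).length +
    (if (w.get i).2 then
        ((List.finRange w.length).filter
          (fun j => decide (i < j ∧ w.get j = w.get i))).length
      else
        ((List.finRange w.length).filter
          (fun j => decide (j < i ∧ w.get j = w.get i))).length) + 1)

/-- The free `ℤ`-algebra on the ordinary (unbarred) alphabet `ℕ`. -/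
abbrev FAO := MonoidAlgebra ℤ (FreeMonoid ℕ)

/-- The monomial of an ordinary word. -/
def wrdO (w : List ℕ) : FAO := MonoidAlgebra.single (FreeMonoid.ofList w) 1

/-- The ordinary Knuth (plactic) relations. -/
inductive knuthRel : FAO → FAO → Prop
  | k1 (a b c : ℕ) (h1 : a < b) (h2 : b < c) : knuthRel (wrdO [a, c, b]) (wrdO [c, a, b])
  | k2 (a b c : ℕ) (h1 : a < b) (h2 : b < c) : knuthRel (wrdO [b, a, c]) (wrdO [b, c, a])
  | k3 (a b : ℕ) (h : a < b) : knuthRel (wrdO [b, b, a]) (wrdO [b, a, b])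
  | k4 (b c : ℕ) (h : b < c) : knuthRel (wrdO [c, b, b]) (wrdO [b, c, b])

/-! ### Pairing, the noncommutative Cauchy product, symmetric series -/

/-- The bilinear pairing on `U` for which the colored words are orthonormal. -/
def pairU (f g : FA N) : ℤ := ∑ w ∈ f.coeff.support, f.coeff w * g.coeff w

/-- Coefficient of `x^m` in the noncommutative Cauchy product
`Ω(x,u) = Π_j (c_{z_1}(x_j) ⋯ c_{z_{2N}}(x_j))`: the product of the `h_{m_j}(u)`
in increasing order of `j`. -/
def OmegaC (key : Letter N → ℕ) (m : ℕ →₀ ℕ) : FA N :=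
  ((m.support.sort (· ≤ ·)).map (fun j => hU key (m j))).prod

/-- Total degree of a monomial. -/
def degM (m : ℕ →₀ ℕ) : ℕ := m.sum fun _ k => k

/-- Coefficient of `x^m` in the monomial symmetric function `m_ν`. -/
def mCoeff {k : ℕ} (ν : Nat.Partition k) (m : ℕ →₀ ℕ) : ℤ :=
  if Multiset.map (fun j => m j) m.support.val = ν.parts then 1 else 0

/-- `h_ν(u) = h_{ν_1}(u) h_{ν_2}(u) ⋯`. -/
def hProd (key : Letter N → ℕ) (L : List ℕ) : FA N := (L.map (hU key)).prod

/-- Coefficient of `x^m` in `F_γ(x) = Σ_w γ_w Q_{Des(w)}(x)`. -/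
def FgammaC (key : Letter N → ℕ) (γ : FA N) (m : ℕ →₀ ℕ) : ℤ :=
  ∑ w ∈ γ.coeff.support, γ.coeff w *
    Qcoeff (FreeMonoid.toList w).length (DesSet key (FreeMonoid.toList w)) m

/-- A series (given by its coefficients) is symmetric. -/
def SymmSeries (F : (ℕ →₀ ℕ) → ℤ) : Prop :=
  ∀ σ : Equiv.Perm ℕ, ∀ m : ℕ →₀ ℕ, F (Finsupp.mapDomain σ m) = F m

/-! ### Characters of symmetric groups and Kronecker coefficients -/

/-- The power sum polynomial `p_k` in `n` variables. -/
def powS (n k : ℕ) : MvPolynomial (Fin n) ℤ := ∑ j : Fin n, MvPolynomial.X j ^ k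

/-- The Vandermonde alternant `a_δ = Σ_σ sgn(σ) Π_i x_{σ(i)}^{n-1-i}`. -/
def aDelta (n : ℕ) : MvPolynomial (Fin n) ℤ :=
  ∑ σ : Equiv.Perm (Fin n),
    (Equiv.Perm.sign σ : ℤ) • ∏ i : Fin n, MvPolynomial.X (σ i) ^ (n - 1 - (i : ℕ))

/-- The irreducible character `χ^λ` of `S_n` evaluated at `σ`, via the Frobenius
character formula: the coefficient of `x^{λ+δ}` in `a_δ · p_{cycleType σ}`. -/
def chi (n : ℕ) (lam : Fin n → ℕ) (σ : Equiv.Perm (Fin n)) : ℤ :=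
  MvPolynomial.coeff
    (Finsupp.equivFunOnFinite.symm (fun i : Fin n => lam i + (n - 1 - (i : ℕ))))
    (aDelta n * (σ.cycleType.map (fun k => powS n k)).prod)

/-- The hook partition `μ(d) = (n-d, 1^d)`, as a function on `Fin n`. -/
def hookP (n d : ℕ) : Fin n → ℕ :=
  fun i => if (i : ℕ) = 0 then n - d else if (i : ℕ) ≤ d then 1 else 0

/-- `n!` times the Kronecker coefficient `g_{λμν}`, via
`g = (1/n!) Σ_σ χ^λ(σ) χ^μ(σ) χ^ν(σ)`. -/
def kronC (n : ℕ) (lam mu nu : Fin n → ℕ) : ℤ :=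
  ∑ σ : Equiv.Perm (Fin n), chi n lam σ * chi n mu σ * chi n nu σ

/-! ### Power series in `s` and `t` over `U/I_kronknuth` -/

/-- The quotient `U/I_kronknuth`. -/
abbrev QKK (N : ℕ) := RingQuot (kkRel N)

/-- The image of a generator in `U/I_kronknuth`. -/
def uQ (x : Letter N) : QKK N := RingQuot.mkRingHom (kkRel N) (wrd [x])

/-- A power series in `s` (variable `0`) only. -/
def serS (c : ℕ → QKK N) : MvPowerSeries (Fin 2) (QKK N) :=
  fun m => if m 1 = 0 then c (m 0) else 0

/-- A power series in `t` (variable `1`) only. -/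
def serT (c : ℕ → QKK N) : MvPowerSeries (Fin 2) (QKK N) :=
  fun m => if m 0 = 0 then c (m 1) else 0

/-- A constant power series. -/
def constSer (a : QKK N) : MvPowerSeries (Fin 2) (QKK N) :=
  fun m => if m = 0 then a else 0

/-- `f_x = 1 + u_x s` (`x` unbarred), `(1 - u_x s)⁻¹ = Σ_k u_x^k s^k` (`x` barred). -/
def fSer (x : Letter N) : MvPowerSeries (Fin 2) (QKK N) :=
  serS (fun k => if x.2 then uQ x ^ k else if k = 0 then 1 else if k = 1 then uQ x else 0)

/-- The inverse of `f_x`. -/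
def fSerInv (x : Letter N) : MvPowerSeries (Fin 2) (QKK N) :=
  serS (fun k => if x.2 then (if k = 0 then 1 else if k = 1 then -uQ x else 0)
    else (-uQ x) ^ k)

/-- `g_z = 1 + u_z t` (`z` unbarred), `(1 - u_z t)⁻¹` (`z` barred). -/
def gSer (z : Letter N) : MvPowerSeries (Fin 2) (QKK N) :=
  serT (fun k => if z.2 then uQ z ^ k else if k = 0 then 1 else if k = 1 then uQ z else 0)

/-- The inverse of `g_z`. -/
def gSerInv (z : Letter N) : MvPowerSeries (Fin 2) (QKK N) :=
  serT (fun k => if z.2 then (if k = 0 then 1 else if k = 1 then -uQ z else 0)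
    else (-uQ z) ^ k)

end NCS
namespace NCS

section ConvHelpers

variable {α : Type*} (p : α → Bool)

theorem conv_nil : conv p ([] : List α) = [] := by rw [conv]

theorem conv_cons_neg (x : α) (xs : List α) (h : ¬ p x = true) :
    conv p (x :: xs) = x :: conv p xs := by rw [conv]; simp [h]

theorem conv_cons_pos (x : α) (xs : List α) (h : p x = true) :
    conv p (x :: xs) = rotR ((x :: xs).takeWhile p) ++ conv p (xs.dropWhile p) := by
  rw [conv]; simp [h]

theorem rotR_concat (ys : List α) (y : α) : rotR (ys ++ [y]) = y :: ys := by
  unfold rotR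
  have h1 : (ys ++ [y]).length - 1 = ys.length := by simp
  rw [h1, List.rotate_eq_drop_append_take (by simp), List.drop_left, List.take_left]
  rfl

theorem rotR_length (l : List α) : (rotR l).length = l.length := by simp [rotR]

theorem rotR_mem {l : List α} {y : α} (h : y ∈ rotR l) : y ∈ l := by
  simpa [rotR] using h

theorem rotR_getElem?_succ (l : List α) (i : ℕ) (h : i + 1 < l.length) :
    (rotR l)[i+1]? = l[i]? := by
  obtain rfl | ⟨ys, y, rfl⟩ := l.eq_nil_or_concat
  · simp at h
  · simp only [List.concat_eq_append] at h ⊢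
    rw [rotR_concat, List.getElem?_cons_succ,
      List.getElem?_append_left (by simpa using h)]

/-- The combined structural specification of `conv`. -/
def ConvSpec (w w' : List α) : Prop :=
  w'.length = w.length ∧
  (∀ i : ℕ, w'[i]?.map p = w[i]?.map p) ∧
  (∀ i : ℕ, ∀ x : α, w[i]? = some x → p x = false → w'[i]? = some x) ∧
  (∀ i : ℕ, ∀ x y : α, w[i]? = some x → w[i+1]? = some y → p x = true → p y = true →
    w'[i+1]? = some x)

theorem conv_spec : ∀ n (w : List α), w.length ≤ n → ConvSpec p w (conv p w) := by
  intro n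
  induction n with
  | zero =>
    intro w hw
    have : w = [] := List.length_eq_zero_iff.mp (Nat.le_zero.mp hw)
    subst this
    refine ⟨by simp [conv_nil], ?_, ?_, ?_⟩ <;> simp [conv_nil]
  | succ n IH =>
    intro w hw
    match w with
    | [] => refine ⟨by simp [conv_nil], ?_, ?_, ?_⟩ <;> simp [conv_nil]
    | x :: xs =>
      have hxs : xs.length ≤ n := by simpa using hw
      by_cases hx : p x = true
      · -- positive head: rotate the first run
        have hconv : conv p (x :: xs) = rotR ((x :: xs).takeWhile p) ++ conv p (xs.dropWhile p) :=
          conv_cons_pos p x xs hx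
        set t := (x :: xs).takeWhile p with ht
        set d := xs.dropWhile p with hd
        have htd : t ++ d = x :: xs := by
          rw [ht, hd, List.takeWhile_cons_of_pos hx]
          simpa using (List.takeWhile_append_dropWhile (p := p) (l := xs))
        have hdn : d.length ≤ n := le_trans (List.dropWhile_suffix p).length_le hxs
        obtain ⟨ihlen, ihp, ihfix, ihrot⟩ := IH d hdn
        have htp : ∀ y ∈ t, p y = true := fun y hy => List.mem_takeWhile_imp hy
        have hrtp : ∀ y ∈ rotR t, p y = true := fun y hy => htp y (rotR_mem hy)
        have htne : t ≠ [] := by rw [ht, List.takeWhile_cons_of_pos hx]; simp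
        have htlen : 0 < t.length := List.length_pos_iff.mpr htne
        have hrtlen : (rotR t).length = t.length := rotR_length t
        have hd0 : ∀ z : α, d[0]? = some z → p z = false := by
          intro z hz
          have h0 : 0 < d.length := by
            by_contra h0
            rw [List.getElem?_eq_none (by omega)] at hz
            simp at hz
          have hne : d ≠ [] := List.ne_nil_of_length_pos h0
          have hzz : d[0] = z := by
            rw [List.getElem?_eq_getElem h0] at hz; exact Option.some.inj hz
          have hh : p (d.head hne) = false := List.head_dropWhile_not p (l := xs) hne
          rwa [List.head_eq_getElem, hzz] at hh
        rw [hconv, ← htd]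
        refine ⟨by simp [ihlen, hrtlen], ?_, ?_, ?_⟩
        · intro i
          by_cases hi : i < t.length
          · rw [List.getElem?_append_left hi, List.getElem?_append_left (by omega),
              List.getElem?_eq_getElem hi, List.getElem?_eq_getElem (by omega)]
            simp only [Option.map_some]
            rw [htp _ (List.getElem_mem hi), hrtp _ (List.getElem_mem (by omega))]
          · push_neg at hi
            rw [List.getElem?_append_right hi, List.getElem?_append_right (by omega), hrtlen]
            exact ihp (i - t.length)
        · intro i z hz hpz
          by_cases hi : i < t.length
          · exfalso
            rw [List.getElem?_append_left hi, List.getElem?_eq_getElem hi] at hz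
            have := htp _ (List.getElem_mem hi)
            rw [Option.some.inj hz] at this
            rw [this] at hpz; exact Bool.noConfusion hpz
          · push_neg at hi
            rw [List.getElem?_append_right hi] at hz
            rw [List.getElem?_append_right (by omega), hrtlen]
            exact ihfix _ _ hz hpz
        · intro i z y hz hy hpz hpy
          by_cases hi1 : i + 1 < t.length
          · -- inside the rotated run
            rw [List.getElem?_append_left (by omega), List.getElem?_eq_getElem (by omega)] at hz
            rw [List.getElem?_append_left (by omega : i + 1 < (rotR t).length),
              rotR_getElem?_succ t i hi1, List.getElem?_eq_getElem (by omega)]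
            rw [← hz]
          · by_cases hi2 : i + 1 = t.length
            · -- the pair straddles the run boundary: contradiction, d starts non-p
              exfalso
              rw [List.getElem?_append_right (by omega)] at hy
              have : d[0]? = some y := by rwa [hi2, Nat.sub_self] at hy
              rw [hd0 y this] at hpy
              exact Bool.noConfusion hpy
            · -- both in the tail
              have hi : t.length ≤ i := by omega
              rw [List.getElem?_append_right hi] at hz
              rw [List.getElem?_append_right (by omega)] at hy
              rw [List.getElem?_append_right (by rw [hrtlen]; omega), hrtlen]
              have h1 : i + 1 - t.length = (i - t.length) + 1 := by omega
              rw [h1] at hy ⊢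
              exact ihrot _ _ _ hz hy hpz hpy
      · -- negative head
        have hconv : conv p (x :: xs) = x :: conv p xs := conv_cons_neg p x xs hx
        obtain ⟨ihlen, ihp, ihfix, ihrot⟩ := IH xs hxs
        rw [hconv]
        refine ⟨by simp [ihlen], ?_, ?_, ?_⟩
        · intro i
          match i with
          | 0 => simp
          | Nat.succ j => simpa using ihp j
        · intro i z hz hpz
          match i with
          | 0 => simpa using hz
          | Nat.succ j =>
            simp only [List.getElem?_cons_succ] at hz ⊢
            exact ihfix _ _ hz hpz
        · intro i z y hz hy hpz hpy
          match i with
          | 0 =>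
            exfalso
            simp only [List.getElem?_cons_zero] at hz
            rw [← Option.some.inj hz] at hpz
            exact hx hpz
          | Nat.succ j =>
            simp only [List.getElem?_cons_succ] at hz hy ⊢
            exact ihrot _ _ _ hz hy hpz hpy

end ConvHelpers

/-- Word conversion between two shuffle orders which differ
only in the order of the unbarred letter `b` and the barred letter `ā`
preserves descent sets: `Des_{⋖'}(conv(w)) = Des_⋖(w)`. -/
theorem word_conversion_descents (N : ℕ) (key key' : Letter N → ℕ)
    (hk : IsShuffleKey key) (hk' : IsShuffleKey key') (b abar : Fin N)
    (hlt : key (b, false) < key (abar, true))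
    (hlt' : key' (abar, true) < key' (b, false))
    (hagree : ∀ x y : Letter N,
      ¬ ((x = ((abar, true) : Letter N) ∧ y = ((b, false) : Letter N)) ∨
          (x = ((b, false) : Letter N) ∧ y = ((abar, true) : Letter N))) →
      (key x < key y ↔ key' x < key' y))
    (w : List (Letter N)) :
    DesSet key'
        (conv (fun u => decide (u = ((abar, true) : Letter N) ∨
          u = ((b, false) : Letter N))) w) =
      DesSet key w := by
  classical
  set A : Letter N := (abar, true) with hA
  set B : Letter N := (b, false) with hB
  set p : Letter N → Bool := fun u => decide (u = A ∨ u = B) with hp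
  have hmem : ∀ u : Letter N, p u = true ↔ (u = A ∨ u = B) := by
    intro u; simp [hp]
  have hmemf : ∀ u : Letter N, p u = false → u ≠ A ∧ u ≠ B := by
    intro u hu
    constructor <;> rintro rfl <;> simp [hp] at hu
  have hABne : A ≠ B := by simp [hA, hB]
  have hagree' : ∀ x y : Letter N, (x ≠ A ∧ x ≠ B) ∨ (y ≠ A ∧ y ≠ B) →
      (key x < key y ↔ key' x < key' y) := by
    intro x y h
    apply hagree
    rintro (⟨rfl, rfl⟩ | ⟨rfl, rfl⟩) <;> rcases h with ⟨h1, h2⟩ | ⟨h1, h2⟩ <;>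
      first | exact h1 rfl | exact h2 rfl
  have no_between : ∀ x : Letter N, ¬ (key B < key x ∧ key x < key A) := by
    rintro x ⟨h1, h2⟩
    have hxA : x ≠ A := by rintro rfl; exact lt_irrefl _ h2
    have hxB : x ≠ B := by rintro rfl; exact lt_irrefl _ h1
    have e1 : key' B < key' x := (hagree' B x (Or.inr ⟨hxA, hxB⟩)).mp h1
    have e2 : key' x < key' A := (hagree' x A (Or.inl ⟨hxA, hxB⟩)).mp h2
    exact absurd (e1.trans e2) (not_lt.mpr hlt'.le)
  have kltB_iff : ∀ x : Letter N, x ≠ A → x ≠ B → (key x < key B ↔ key x < key A) := by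
    intro x hxA hxB
    constructor
    · intro h; exact h.trans hlt
    · intro h
      by_contra hno
      have hne : key B ≠ key x := fun e => hxB (hk.1 e.symm)
      have : key B < key x := lt_of_le_of_ne (not_lt.mp hno) hne
      exact no_between x ⟨this, h⟩
  have kBlt_iff : ∀ x : Letter N, x ≠ A → x ≠ B → (key B < key x ↔ key A < key x) := by
    intro x hxA hxB
    constructor
    · intro h
      by_contra hno
      have hne : key x ≠ key A := fun e => hxA (hk.1 e)
      have : key x < key A := lt_of_le_of_ne (not_lt.mp hno) hne
      exact no_between x ⟨h, this⟩
    · intro h; exact hlt.trans h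
  have hnltk : ¬ key A < key B := lt_asymm hlt
  have hnltk' : ¬ key' B < key' A := lt_asymm hlt'
  -- the pointwise descent comparison
  have key_iff : ∀ x y x' y' : Letter N, p x' = p x → p y' = p y →
      (p x = false → x' = x) → (p y = false → y' = y) →
      (p x = true → p y = true → y' = x) →
      ((key' y' < key' x' ∨ (x' = y' ∧ y'.2 = true)) ↔
        (key y < key x ∨ (x = y ∧ y.2 = true))) := by
    intro x y x' y' hpx' hpy' hfx hfy hr
    by_cases hpx : p x = true <;> by_cases hpy : p y = true
    · -- both special
      have hyx : y' = x := hr hpx hpy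
      have hxAB := (hmem x).mp hpx
      have hyAB := (hmem y).mp hpy
      have hx'AB := (hmem x').mp (by rw [hpx', hpx])
      subst hyx
      rcases hxAB with rfl | rfl <;> rcases hyAB with rfl | rfl <;>
        rcases hx'AB with rfl | rfl <;>
        simp [hA, hB, hlt, hlt', hnltk, hnltk', lt_self_iff_false, Prod.ext_iff,
            (show key (b, false) < key (abar, true) from hlt),
            (show key' (abar, true) < key' (b, false) from hlt'),
            (show key (b, false) ≤ key (abar, true) from hlt.le),
            (show key' (abar, true) ≤ key' (b, false) from hlt'.le),
            (show ¬ key (abar, true) < key (b, false) from hnltk),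
            (show ¬ key' (b, false) < key' (abar, true) from hnltk')]
    · -- x special, y not
      have hpyf : p y = false := by simpa using hpy
      have hyy : y' = y := hfy hpyf
      have hxAB := (hmem x).mp hpx
      have hx'AB := (hmem x').mp (by rw [hpx', hpx])
      obtain ⟨hyA, hyB⟩ := hmemf y hpyf
      rw [hyy]
      have hne1 : ¬ (x = y ∧ y.2 = true) := by
        rintro ⟨rfl, -⟩
        rcases hxAB with rfl | rfl
        · exact hyA rfl
        · exact hyB rfl
      have hne2 : ¬ (x' = y ∧ y.2 = true) := by
        rintro ⟨rfl, -⟩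
        rcases hx'AB with rfl | rfl
        · exact hyA rfl
        · exact hyB rfl
      rw [or_iff_left hne1, or_iff_left hne2]
      have c1 : key' y < key' x' ↔ key y < key x' :=
        (hagree' y x' (Or.inl ⟨hyA, hyB⟩)).symm
      have c2 : key y < key x' ↔ key y < key A := by
        rcases hx'AB with rfl | rfl
        · exact Iff.rfl
        · exact kltB_iff y hyA hyB
      have c3 : key y < key x ↔ key y < key A := by
        rcases hxAB with rfl | rfl
        · exact Iff.rfl
        · exact kltB_iff y hyA hyB
      rw [c1, c2, c3]
    · -- y special, x not
      have hpxf : p x = false := by simpa using hpx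
      have hxx : x' = x := hfx hpxf
      have hyAB := (hmem y).mp hpy
      have hy'AB := (hmem y').mp (by rw [hpy', hpy])
      obtain ⟨hxA, hxB⟩ := hmemf x hpxf
      rw [hxx]
      have hne1 : ¬ (x = y ∧ y.2 = true) := by
        rintro ⟨rfl, -⟩
        rcases hyAB with h | h
        · exact hxA h
        · exact hxB h
      have hne2 : ¬ (x = y' ∧ y'.2 = true) := by
        rintro ⟨rfl, -⟩
        rcases hy'AB with h | h
        · exact hxA h
        · exact hxB h
      rw [or_iff_left hne1, or_iff_left hne2]
      have c1 : key' y' < key' x ↔ key y' < key x :=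
        (hagree' y' x (Or.inr ⟨hxA, hxB⟩)).symm
      have c2 : key y' < key x ↔ key A < key x := by
        rcases hy'AB with rfl | rfl
        · exact Iff.rfl
        · exact kBlt_iff x hxA hxB
      have c3 : key y < key x ↔ key A < key x := by
        rcases hyAB with rfl | rfl
        · exact Iff.rfl
        · exact kBlt_iff x hxA hxB
      rw [c1, c2, c3]
    · -- neither special
      have hpxf : p x = false := by simpa using hpx
      have hpyf : p y = false := by simpa using hpy
      rw [hfx hpxf, hfy hpyf]
      obtain ⟨hyA, hyB⟩ := hmemf y hpyf
      exact or_congr ((hagree' y x (Or.inl ⟨hyA, hyB⟩)).symm) Iff.rfl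
  -- structural facts about conv
  obtain ⟨hlen, hmapp, hfix, hrot⟩ := conv_spec p w.length w le_rfl
  set w' := conv p w with hw'
  have main : ∀ i : ℕ, ∀ h : i + 1 < w.length, ∀ h' : i + 1 < w'.length,
      ((key' (w'[i+1]) < key' (w'[i]'(by omega)) ∨
          (w'[i]'(by omega) = w'[i+1] ∧ (w'[i+1]).2 = true)) ↔
        (key (w[i+1]) < key (w[i]'(by omega)) ∨
          (w[i]'(by omega) = w[i+1] ∧ (w[i+1]).2 = true))) := by
    intro i h h'
    have hi : i < w.length := by omega
    have hi' : i < w'.length := by omega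
    have e1 : p (w'[i]) = p (w[i]) := by
      have := hmapp i
      rw [List.getElem?_eq_getElem hi', List.getElem?_eq_getElem hi] at this
      simpa using this
    have e2 : p (w'[i+1]) = p (w[i+1]) := by
      have := hmapp (i + 1)
      rw [List.getElem?_eq_getElem h', List.getElem?_eq_getElem h] at this
      simpa using this
    have e3 : p (w[i]) = false → w'[i] = w[i] := by
      intro hf
      have := hfix i (w[i]) (List.getElem?_eq_getElem hi) hf
      rw [List.getElem?_eq_getElem hi'] at this
      exact Option.some.inj this
    have e4 : p (w[i+1]) = false → w'[i+1] = w[i+1] := by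
      intro hf
      have := hfix (i + 1) (w[i+1]) (List.getElem?_eq_getElem h) hf
      rw [List.getElem?_eq_getElem h'] at this
      exact Option.some.inj this
    have e5 : p (w[i]) = true → p (w[i+1]) = true → w'[i+1] = w[i] := by
      intro h1 h2
      have := hrot i (w[i]) (w[i+1]) (List.getElem?_eq_getElem hi)
        (List.getElem?_eq_getElem h) h1 h2
      rw [List.getElem?_eq_getElem h'] at this
      exact Option.some.inj this
    exact key_iff (w[i]) (w[i+1]) (w'[i]) (w'[i+1]) e1 e2 e3 e4 e5
  ext i
  simp only [DesSet, Set.mem_setOf_eq, List.get_eq_getElem]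
  constructor
  · rintro ⟨h', hc⟩
    have h : i + 1 < w.length := by omega
    exact ⟨h, (main i h h').mp hc⟩
  · rintro ⟨h, hc⟩
    have h' : i + 1 < w'.length := by omega
    exact ⟨h', (main i h h').mpr hc⟩

end NCS
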